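/- Fix γ > 0 and let ψ̂^m(z) = ((1+z)/2)·(1 + γ(1−z)/(m(1+z)))^{−m} for integers m ≥ 1. Then Kolmogorov's geometric-mean formula evaluates exactly: σ_S²(ψ̂^m) := exp((1/2π)∫_{−π}^{π} log|ψ̂^m(e^{−iλ})|² dλ) = (1/4)·(1 + γ/m)^{−2m} = ψ̂^m(0)². Moreover, there exists C > 0 depending only on γ such that for all m ≥ 1, |(1/4)(1 + γ/m)^{−2m} − (1/4)e^{−2γ}| ≤ C/m; hence |σ_S²(ψ̂^m) − σ_S*²| ≤ C/m where σ_S*² = e^{−2γ}/4. -/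

import Mathlib

open MeasureTheory intervalIntegral

/-- The ARMA approximation `ψ̂^m(z) = ((1+z)/2)(1 + γ(1−z)/(m(1+z)))^{−m}`. -/
noncomputable def psiHatFn (γ : ℝ) (m : ℕ) : ℂ → ℂ := fun z =>
  ((1 + z) / 2) * ((1 + (γ : ℂ) * (1 - z) / ((m : ℂ) * (1 + z)))⁻¹) ^ m

/-- Supplier's MSFE of a circle function via Kolmogorov's formula. -/
noncomputable def sigmaS2c (F : ℝ → ℂ) : ℝ :=
  Real.exp ((1 / (2 * Real.pi)) * ∫ l in (-Real.pi)..Real.pi, Real.log (‖F l‖ ^ 2))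

section KolmogorovAux
open Real Set

lemma abs_log_le (x : ℝ) (hx : 0 < x) : |Real.log x| ≤ 2 * x ^ (-(1:ℝ)/2) + x := by
  rcases le_or_gt 1 x with h | h
  · have h1 : Real.log x ≤ x - 1 := Real.log_le_sub_one_of_pos hx
    have h2 : 0 ≤ Real.log x := Real.log_nonneg h
    have h3 : (0:ℝ) < x ^ (-(1:ℝ)/2) := Real.rpow_pos_of_pos hx _
    rw [abs_of_nonneg h2]; nlinarith
  · have h0 : Real.log (x ^ (-(1:ℝ)/2)) ≤ x ^ (-(1:ℝ)/2) - 1 :=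
      Real.log_le_sub_one_of_pos (Real.rpow_pos_of_pos hx _)
    rw [Real.log_rpow hx] at h0
    have h2 : Real.log x ≤ 0 := Real.log_nonpos (le_of_lt hx) h.le
    rw [abs_of_nonpos h2]; nlinarith

lemma intervalIntegrable_log_zero {b : ℝ} (hb : 0 ≤ b) :
    IntervalIntegrable Real.log volume 0 b := by
  rw [intervalIntegrable_iff, uIoc_of_le hb]
  have hg : IntegrableOn (fun x : ℝ => 2 * x ^ (-(1:ℝ)/2) + x) (Ioc 0 b) volume := by
    have h1 : IntervalIntegrable (fun x : ℝ => 2 * x ^ (-(1:ℝ)/2) + x) volume 0 b := by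
      apply IntervalIntegrable.add
      · exact (intervalIntegral.intervalIntegrable_rpow' (by norm_num)).const_mul 2
      · exact intervalIntegrable_id
    rw [intervalIntegrable_iff, uIoc_of_le hb] at h1; exact h1
  refine Integrable.mono' hg (Real.measurable_log.aestronglyMeasurable) ?_
  rw [ae_restrict_iff' measurableSet_Ioc]
  exact Filter.Eventually.of_forall (fun x hx => abs_log_le x hx.1)


lemma cos_half_lower {x : ℝ} (h1 : -π ≤ x) (h2 : x ≤ π) :
    (π - |x|) / π ≤ Real.cos (x/2) := by
  have hx : |x| ≤ π := abs_le.mpr ⟨h1, h2⟩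
  have h0 : (0:ℝ) ≤ |x| := abs_nonneg x
  have hππ : (0:ℝ) < π := Real.pi_pos
  have hc : Real.cos (x/2) = Real.sin ((π - |x|)/2) := by
    rw [show (π - |x|)/2 = π/2 - |x|/2 by ring, Real.sin_pi_div_two_sub,
      show |x|/2 = |x/2| by rw [abs_div]; simp, Real.cos_abs]
  rw [hc]
  have := Real.mul_le_sin (x := (π - |x|)/2) (by linarith) (by linarith)
  calc (π - |x|)/π = 2/π * ((π - |x|)/2) := by field_simp
    _ ≤ _ := this

/-- integrability of `log (2 + 2 cos λ)` on `[-π, π]`. -/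
lemma intInt_log_two_add_cos : IntervalIntegrable (fun x => Real.log (2 + 2 * Real.cos x))
    volume (-π) π := by
  have hππ : (0:ℝ) < π := Real.pi_pos
  rw [intervalIntegrable_iff, uIoc_of_le (by linarith)]
  -- bound function
  set G : ℝ → ℝ := fun x => Real.log 4 + 2*Real.log π + 2*|Real.log (π - x)| + 2*|Real.log (π + x)|
    with hG
  have hGint : IntegrableOn G (Ioc (-π) π) volume := by
    have h1 : IntervalIntegrable (fun x => Real.log (π - x)) volume (-π) π := by
      have := (intervalIntegrable_log_zero (b := 2*π) (by linarith)).comp_sub_left π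
      simpa [show π - 2*π = -π by ring] using this.symm
    have h2 : IntervalIntegrable (fun x => Real.log (π + x)) volume (-π) π := by
      have := (intervalIntegrable_log_zero (b := 2*π) (by linarith)).comp_add_right π
      simpa [show 2*π - π = π by ring, add_comm] using this
    have : IntervalIntegrable G volume (-π) π := by
      apply IntervalIntegrable.add
      apply IntervalIntegrable.add
      · exact intervalIntegrable_const
      · exact h1.abs.const_mul 2
      · exact h2.abs.const_mul 2
    rw [intervalIntegrable_iff, uIoc_of_le (by linarith)] at this; exact this
  refine Integrable.mono' hGint ((Real.measurable_log.comp (by fun_prop)).aestronglyMeasurable) ?_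
  rw [ae_restrict_iff' measurableSet_Ioc]
  refine Filter.Eventually.of_forall (fun x hx => ?_)
  obtain ⟨hx1, hx2⟩ := hx
  rcases eq_or_lt_of_le hx2 with rfl | hx2
  · -- x = π : LHS is log 0 = 0
    simp only [Real.cos_pi]
    norm_num
    have l4 : (0:ℝ) ≤ Real.log 4 := Real.log_nonneg (by norm_num)
    have lπ : (0:ℝ) ≤ Real.log π := Real.log_nonneg (by linarith [Real.pi_gt_three])
    positivity
  · -- -π < x < π
    have hxabs : |x| < π := abs_lt.mpr ⟨hx1, hx2⟩
    have hpos : 0 < π - |x| := by linarith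
    have hlow : (π - |x|)/π ≤ Real.cos (x/2) := cos_half_lower hx1.le hx2.le
    have hcos1 : Real.cos (x/2) ≤ 1 := Real.cos_le_one _
    have hcpos : 0 < Real.cos (x/2) := lt_of_lt_of_le (by positivity) hlow
    have hid : 2 + 2*Real.cos x = 4 * Real.cos (x/2)^2 := by
      have := Real.cos_sq (x/2)
      rw [show 2*(x/2) = x by ring] at this
      nlinarith
    have hlog : Real.log (2 + 2*Real.cos x) = Real.log 4 + 2*Real.log (Real.cos (x/2)) := by
      rw [hid, Real.log_mul (by norm_num) (by positivity), Real.log_pow]; push_cast; ring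
    have hub : Real.log (2 + 2*Real.cos x) ≤ Real.log 4 := by
      rw [hlog]
      have : Real.log (Real.cos (x/2)) ≤ 0 := Real.log_nonpos hcpos.le hcos1
      linarith
    have hlb : Real.log 4 + 2*(Real.log (π - |x|) - Real.log π) ≤ Real.log (2 + 2*Real.cos x) := by
      rw [hlog]
      have : Real.log ((π - |x|)/π) ≤ Real.log (Real.cos (x/2)) :=
        Real.log_le_log (by positivity) hlow
      rw [Real.log_div (ne_of_gt hpos) (ne_of_gt hππ)] at this
      linarith
    have habs : |Real.log (π - |x|)| ≤ |Real.log (π - x)| + |Real.log (π + x)| := by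
      rcases abs_cases x with ⟨h, _⟩ | ⟨h, _⟩
      · rw [h]; exact le_add_of_le_of_nonneg le_rfl (abs_nonneg _)
      · rw [h, show π - -x = π + x by ring]
        exact le_add_of_nonneg_of_le (abs_nonneg _) le_rfl
    have lπ : (0:ℝ) ≤ Real.log π := Real.log_nonneg (by linarith [Real.pi_gt_three])
    have l4 : (0:ℝ) ≤ Real.log 4 := Real.log_nonneg (by norm_num)
    rw [Real.norm_eq_abs, abs_le]
    constructor
    · simp only [hG]
      nlinarith [neg_abs_le (Real.log (π - |x|)), abs_nonneg (Real.log (π-x)),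
        abs_nonneg (Real.log (π+x)), hlb, habs]
    · refine hub.trans ?_
      simp only [hG]
      nlinarith [abs_nonneg (Real.log (π-x)), abs_nonneg (Real.log (π+x))]


section LemA
noncomputable def f₁ : ℝ → ℝ := fun x => Real.log (2 + 2 * Real.cos x)
noncomputable def f₂ : ℝ → ℝ := fun x => Real.log (2 - 2 * Real.cos x)

lemma f2_eq_f1_sub : f₂ = fun x => f₁ (x - π) := by
  funext x; simp [f₁, f₂, Real.cos_sub_pi]; ring_nf

lemma f2_eq_f1_add : f₂ = fun x => f₁ (x + π) := by
  funext x; simp [f₁, f₂, Real.cos_add_pi]; ring_nf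

lemma f1_even : ∀ x, f₁ (-x) = f₁ x := fun x => by simp [f₁]
lemma f2_even : ∀ x, f₂ (-x) = f₂ x := fun x => by simp [f₂]

lemma per1 : Function.Periodic f₁ (2*π) := fun x => by simp [f₁, Real.cos_add_two_pi]

lemma int1 : IntervalIntegrable f₁ volume (-π) π := intInt_log_two_add_cos

lemma int2 : IntervalIntegrable f₂ volume (-(2*π)) (2*π) := by
  have ha : IntervalIntegrable f₂ volume 0 (2*π) := by
    rw [f2_eq_f1_sub]
    have h := int1.comp_sub_right π
    rw [show -π + π = (0:ℝ) by ring, show π + π = 2*π by ring] at h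
    exact h
  have hb : IntervalIntegrable f₂ volume (-(2*π)) 0 := by
    rw [f2_eq_f1_add]
    have h := int1.comp_add_right π
    rw [show π - π = (0:ℝ) by ring, show -π - π = -(2*π) by ring] at h
    exact h
  exact hb.trans ha

lemma pi_mem : π/2 ≤ π := by linarith [Real.pi_pos]

lemma int1' {a b : ℝ} (ha : a ∈ Icc (-π) π) (hb : b ∈ Icc (-π) π) :
    IntervalIntegrable f₁ volume a b := by
  apply int1.mono_set
  rw [uIcc_of_le (show (-π:ℝ) ≤ π by linarith [Real.pi_pos])]
  exact uIcc_subset_Icc ha hb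

lemma int2' {a b : ℝ} (ha : a ∈ Icc (-(2*π)) (2*π)) (hb : b ∈ Icc (-(2*π)) (2*π)) :
    IntervalIntegrable f₂ volume a b := by
  apply int2.mono_set
  rw [uIcc_of_le (show (-(2*π):ℝ) ≤ 2*π by linarith [Real.pi_pos])]
  exact uIcc_subset_Icc ha hb

lemma lemA : ∫ x in (-π)..π, Real.log (2 + 2 * Real.cos x) = 0 := by
  have hπ : (0:ℝ) < π := Real.pi_pos
  set A := ∫ x in (-π)..π, f₁ x with hA
  set B := ∫ x in (-π)..π, f₂ x with hB
  set A₁ := ∫ x in (-(π/2))..(π/2), f₁ x with hA₁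
  set J := ∫ x in (0:ℝ)..(π/2), f₂ x with hJ
  -- B = A
  have hBA : B = A := by
    rw [hB, f2_eq_f1_sub, intervalIntegral.integral_comp_sub_right f₁ π,
      show -π - π = -(2*π) by ring, show π - π = (0:ℝ) by ring]
    have := per1.intervalIntegral_add_eq (-(2*π)) (-π)
    rw [show -(2*π) + 2*π = (0:ℝ) by ring, show -π + 2*π = π by ring] at this
    rw [this, hA]
  -- ∫_{π/2}^{π} f₁ = J
  have hJ1 : ∫ x in (π/2)..π, f₁ x = J := by
    rw [hJ]
    have h1 : ∫ x in (0:ℝ)..(π/2), f₂ x = ∫ x in (0:ℝ)..(π/2), f₁ (π - x) := by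
      apply intervalIntegral.integral_congr
      intro x _; rw [f2_eq_f1_sub]
      simp only
      rw [show x - π = -(π - x) by ring, f1_even]
    rw [h1, intervalIntegral.integral_comp_sub_left f₁ π,
      show π - π/2 = π/2 by ring, sub_zero]
  -- ∫_{-π}^{-π/2} f₁ = J
  have hJ2 : ∫ x in (-π)..(-(π/2)), f₁ x = J := by
    have h1 : ∫ x in (-π)..(-(π/2)), f₁ x = ∫ x in (-π)..(-(π/2)), f₁ (-x) := by
      apply intervalIntegral.integral_congr; intro x _; exact (f1_even x).symm
    rw [h1, intervalIntegral.integral_comp_neg f₁, neg_neg, neg_neg, hJ1]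
  -- A = A₁ + 2J
  have hsplit : A = J + A₁ + J := by
    have i1 : IntervalIntegrable f₁ volume (-π) (-(π/2)) :=
      int1' (by constructor <;> linarith) (by constructor <;> linarith)
    have i2 : IntervalIntegrable f₁ volume (-(π/2)) (π/2) :=
      int1' (by constructor <;> linarith) (by constructor <;> linarith)
    have i3 : IntervalIntegrable f₁ volume (π/2) π :=
      int1' (by constructor <;> linarith) (by constructor <;> linarith)
    have e1 := intervalIntegral.integral_add_adjacent_intervals (i1.trans i2) i3
    have e2 := intervalIntegral.integral_add_adjacent_intervals i1 i2
    rw [hA, hA₁, hJ]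
    rw [hA₁, hJ] at *
    linarith [hJ1, hJ2]
  -- B₁ = 2J
  have hB₁ : ∫ x in (-(π/2))..(π/2), f₂ x = 2*J := by
    have i1 : IntervalIntegrable f₂ volume (-(π/2)) 0 :=
      int2' (by constructor <;> linarith) (by constructor <;> linarith)
    have i2 : IntervalIntegrable f₂ volume 0 (π/2) :=
      int2' (by constructor <;> linarith) (by constructor <;> linarith)
    rw [← intervalIntegral.integral_add_adjacent_intervals i1 i2]
    have h1 : ∫ x in (-(π/2))..(0:ℝ), f₂ x = J := by
      have h2 : ∫ x in (-(π/2))..(0:ℝ), f₂ x = ∫ x in (-(π/2))..(0:ℝ), f₂ (-x) := by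
        apply intervalIntegral.integral_congr; intro x _; exact (f2_even x).symm
      rw [h2, intervalIntegral.integral_comp_neg f₂, neg_neg, neg_zero, hJ]
    rw [h1, hJ]; ring
  -- duplication : B/2 = A₁ + 2J
  have hdup : (2:ℝ)⁻¹ * B = A₁ + 2*J := by
    have h1 : ∫ x in (-(π/2))..(π/2), f₂ (2*x) = (2:ℝ)⁻¹ • ∫ x in (-π)..π, f₂ x := by
      have := intervalIntegral.integral_comp_mul_left (a := -(π/2)) (b := π/2) f₂
        (c := (2:ℝ)) (by norm_num)
      rw [show (2:ℝ)*(-(π/2)) = -π by ring, show (2:ℝ)*(π/2) = π by ring] at this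
      exact this
    have h2 : ∫ x in (-(π/2))..(π/2), f₂ (2*x) = ∫ x in (-(π/2))..(π/2), (f₁ x + f₂ x) := by
      apply intervalIntegral.integral_congr_ae
      have h0 : ∀ᵐ x : ℝ ∂volume, x ≠ (0:ℝ) := by
        refine (MeasureTheory.ae_iff).mpr ?_
        simpa using Real.volume_singleton
      filter_upwards [h0] with x hx0 hxmem
      rw [Set.uIoc_of_le (by linarith)] at hxmem
      obtain ⟨hx1, hx2⟩ := hxmem
      have hc : 0 ≤ Real.cos x := Real.cos_nonneg_of_mem_Icc ⟨by linarith, hx2⟩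
      have hc1 : Real.cos x ≠ 1 := by
        intro h
        exact hx0 ((Real.cos_eq_one_iff_of_lt_of_lt (x := x) (by linarith) (by linarith)).mp h)
      have hprod : 2 - 2*Real.cos (2*x) = (2 - 2*Real.cos x) * (2 + 2*Real.cos x) := by
        rw [Real.cos_two_mul]; ring
      simp only [f₁, f₂]
      rw [hprod, Real.log_mul (by intro h; apply hc1; linarith) (by nlinarith)]; ring
    have h3 : ∫ x in (-(π/2))..(π/2), (f₁ x + f₂ x) = A₁ + 2*J := by
      rw [intervalIntegral.integral_add
        (int1' (by constructor <;> linarith) (by constructor <;> linarith))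
        (int2' (by constructor <;> linarith) (by constructor <;> linarith)), ← hA₁, hB₁]
    rw [← h3, ← h2, h1, hB]; simp
  -- conclude
  have : A = 0 := by
    have h4 : A = A₁ + 2*J := by rw [hsplit]; ring
    rw [hBA] at hdup
    rw [← h4] at hdup
    linarith
  exact this
end LemA


lemma normsq_lin (a b x : ℝ) :
    ‖(a:ℂ) + (b:ℂ) * Complex.exp (Complex.I * x)‖^2 = a^2 + b^2 + 2*a*b*Real.cos x := by
  rw [mul_comm Complex.I (x:ℂ), Complex.exp_mul_I, ← Complex.ofReal_cos, ← Complex.ofReal_sin]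
  rw [Complex.sq_norm, Complex.normSq_apply]
  simp only [Complex.add_re, Complex.add_im, Complex.ofReal_re, Complex.ofReal_im,
    Complex.mul_re, Complex.mul_im, Complex.I_re, Complex.I_im]
  nlinarith [Real.sin_sq_add_cos_sq x]

lemma slit_mem {w : ℂ} (hw : ‖w‖ < 1) : 1 + w ∈ Complex.slitPlane := by
  rw [Complex.mem_slitPlane_iff]
  left
  have := Complex.abs_re_le_norm w
  simp only [Complex.add_re, Complex.one_re]
  have h2 : |w.re| < 1 := lt_of_le_of_lt this hw
  linarith [(abs_lt.mp h2).1]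

lemma meanval (r : ℝ) (hr : |r| < 1) :
    ∫ x in (-π)..π, Real.log (1 + r^2 + 2*r*Real.cos x) = 0 := by
  have hπ : (0:ℝ) < π := Real.pi_pos
  -- reduce to 0..2π by periodicity
  have hper : Function.Periodic (fun x => Real.log (1 + r^2 + 2*r*Real.cos x)) (2*π) := by
    intro x; simp [Real.cos_add_two_pi]
  have hshift := hper.intervalIntegral_add_eq (-π) 0
  rw [show -π + 2*π = π by ring, zero_add] at hshift
  rw [hshift]
  rcases eq_or_ne r 0 with rfl | hr0
  · simp
  have hR : 0 < |r| := abs_pos.mpr hr0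
  -- the holomorphic function
  set c : ℂ := (r : ℂ) / (|r| : ℝ) with hc
  have hcabs : ‖c‖ = 1 := by
    rw [hc]
    rw [norm_div]
    simp [Complex.norm_real, abs_abs, div_self (ne_of_gt hR)]
  set f : ℂ → ℂ := fun z => Complex.log (1 + c * z) with hf
  have hmem : ∀ z : ℂ, ‖z‖ ≤ |r| → 1 + c * z ∈ Complex.slitPlane := by
    intro z hz
    apply slit_mem
    rw [norm_mul, hcabs, one_mul]
    exact lt_of_le_of_lt hz hr
  have hdiff : DiffContOnCl ℂ f (Metric.ball 0 |r|) := by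
    constructor
    · intro z hz
      rw [Metric.mem_ball, dist_zero_right] at hz
      apply DifferentiableAt.differentiableWithinAt
      exact DifferentiableAt.clog (by fun_prop) (hmem z hz.le)
    · rw [closure_ball 0 (ne_of_gt hR)]
      intro z hz
      rw [Metric.mem_closedBall, dist_zero_right] at hz
      apply ContinuousAt.continuousWithinAt
      exact ContinuousAt.clog (by fun_prop) (hmem z hz)
  have hcauchy := hdiff.circleIntegral_sub_inv_smul (w := 0) (Metric.mem_ball_self hR)
  have hf0 : f 0 = 0 := by simp [hf]
  rw [hf0, smul_zero] at hcauchy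
  -- unfold circle integral
  rw [circleIntegral] at hcauchy
  simp only [deriv_circleMap, sub_zero, smul_eq_mul] at hcauchy
  have hkey : ∫ θ in (0:ℝ)..(2*π), Complex.log (1 + (r:ℂ) * Complex.exp (Complex.I * θ)) = 0 := by
    have hinteq : ∀ θ : ℝ, circleMap 0 |r| θ * Complex.I * ((circleMap 0 |r| θ)⁻¹ * f (circleMap 0 |r| θ))
        = Complex.I * Complex.log (1 + (r:ℂ) * Complex.exp (Complex.I * θ)) := by
      intro θ
      have hne : circleMap 0 |r| θ ≠ 0 := circleMap_ne_center (ne_of_gt hR)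
      have harg : c * circleMap 0 |r| θ = (r:ℂ) * Complex.exp (Complex.I * θ) := by
        have hRne : ((|r|:ℝ):ℂ) ≠ 0 := by exact_mod_cast ne_of_gt hR
        rw [circleMap, hc]
        push_cast
        rw [mul_comm Complex.I (θ:ℂ)]
        field_simp
        ring
      simp only [hf, harg]
      field_simp [hf, harg]
    simp only [hinteq] at hcauchy
    rw [intervalIntegral.integral_const_mul] at hcauchy
    simpa [Complex.I_ne_zero] using hcauchy
  -- take real parts
  have hcont : Continuous fun θ : ℝ => Complex.log (1 + (r:ℂ) * Complex.exp (Complex.I * θ)) := by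
    rw [continuous_iff_continuousAt]
    intro θ
    apply ContinuousAt.clog (by fun_prop)
    apply slit_mem
    rw [norm_mul]
    simp only [Complex.norm_real, Real.norm_eq_abs]
    rw [Complex.norm_exp]
    simp only [Complex.mul_re, Complex.I_re, Complex.I_im, Complex.ofReal_re, Complex.ofReal_im]
    norm_num
    exact hr
  have hii : IntervalIntegrable (fun θ : ℝ => Complex.log (1 + (r:ℂ) * Complex.exp (Complex.I * θ)))
      volume 0 (2*π) := hcont.intervalIntegrable 0 (2*π)
  have hre : ∫ θ in (0:ℝ)..(2*π), (Complex.log (1 + (r:ℂ) * Complex.exp (Complex.I * θ))).re = 0 := by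
    rw [intervalIntegral.integral_of_le (by linarith)] at hkey ⊢
    have := integral_re (μ := volume.restrict (Ioc (0:ℝ) (2*π)))
      (f := fun θ : ℝ => Complex.log (1 + (r:ℂ) * Complex.exp (Complex.I * θ)))
      (by rw [intervalIntegrable_iff, uIoc_of_le (by linarith : (0:ℝ) ≤ 2*π)] at hii; exact hii)
    simp only [RCLike.re_to_complex] at this
    rw [this, hkey]
    simp
  -- identify real part with 1/2 log(...)
  have hlog2 : ∀ θ : ℝ, Real.log (1 + r^2 + 2*r*Real.cos θ)
      = 2 * (Complex.log (1 + (r:ℂ) * Complex.exp (Complex.I * θ))).re := by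
    intro θ
    rw [Complex.log_re]
    have h2 := normsq_lin 1 r θ
    push_cast at h2
    calc Real.log (1 + r^2 + 2*r*Real.cos θ)
        = Real.log (‖(1:ℂ) + (r:ℂ) * Complex.exp (Complex.I * θ)‖^2) := by rw [h2]; ring_nf
      _ = 2 * Real.log ‖(1:ℂ) + (r:ℂ) * Complex.exp (Complex.I * θ)‖ := by
          rw [Real.log_pow]; push_cast; ring
  rw [intervalIntegral.integral_congr (fun θ _ => hlog2 θ), intervalIntegral.integral_const_mul,
    hre, mul_zero]

lemma lemB {a b : ℝ} (hb : |b| < a) :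
    ∫ x in (-π)..π, Real.log (a^2 + b^2 + 2*a*b*Real.cos x) = 4*π*Real.log a := by
  have hπ : (0:ℝ) < π := Real.pi_pos
  have ha : 0 < a := lt_of_le_of_lt (abs_nonneg b) hb
  set r : ℝ := b / a with hrdef
  have hr : |r| < 1 := by
    rw [hrdef, abs_div, abs_of_pos ha, div_lt_one ha]; exact hb
  have hrpos : ∀ x : ℝ, 0 < 1 + r^2 + 2*r*Real.cos x := by
    intro x
    have h3 : |r * Real.cos x| ≤ |r| := by
      rw [abs_mul]
      exact mul_le_of_le_one_right (abs_nonneg r) (Real.abs_cos_le_one x)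
    have h4 : 0 < (1-|r|)*(1-|r|) := mul_pos (by linarith) (by linarith)
    nlinarith [(abs_le.mp h3).1, _root_.sq_abs r, h4]
  have heq : ∀ x ∈ uIcc (-π) π, Real.log (a^2 + b^2 + 2*a*b*Real.cos x)
      = Real.log (a^2) + Real.log (1 + r^2 + 2*r*Real.cos x) := by
    intro x _
    rw [← Real.log_mul (by positivity) (ne_of_gt (hrpos x))]
    congr 1
    rw [hrdef]
    field_simp [hrdef]
  rw [intervalIntegral.integral_congr heq, intervalIntegral.integral_add
    intervalIntegrable_const ?_, meanval r hr, add_zero, intervalIntegral.integral_const]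
  · rw [smul_eq_mul, Real.log_pow, show π - -π = 2*π by ring]
    push_cast
    ring
  · apply Continuous.intervalIntegrable
    apply Continuous.log
    · fun_prop
    · exact fun x => ne_of_gt (hrpos x)


lemma normsq_lin' (a b x : ℝ) :
    ‖(a:ℂ) + (b:ℂ) * Complex.exp (-Complex.I * x)‖^2 = a^2 + b^2 + 2*a*b*Real.cos x := by
  have h : -Complex.I * (x:ℂ) = Complex.I * (((-x : ℝ)):ℂ) := by push_cast; ring
  rw [h, normsq_lin a b (-x), Real.cos_neg]

lemma pointwise_log_norm (γ : ℝ) (hγ : 0 < γ) (m : ℕ) (hm : 1 ≤ m) (x : ℝ)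
    (hx : Real.cos x ≠ -1) :
    Real.log (‖psiHatFn γ m (Complex.exp (-Complex.I * x))‖^2)
      = (1+(m:ℝ)) * Real.log (2+2*Real.cos x) + ((m:ℝ)*Real.log ((m:ℝ)^2) - Real.log 4)
        - (m:ℝ) * Real.log ((((m:ℝ)+γ))^2+(((m:ℝ)-γ))^2
            + 2*((m:ℝ)+γ)*((m:ℝ)-γ)*Real.cos x) := by
  have hmR : (0:ℝ) < m := by exact_mod_cast hm
  set c : ℝ := (m:ℝ) + γ with hcdef
  set d : ℝ := (m:ℝ) - γ with hddef
  have hc : 0 < c := by rw [hcdef]; linarith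
  have hdc : |d| < c := by
    rw [abs_lt]; constructor <;> [skip; skip] <;> rw [hcdef, hddef] <;> linarith
  set z : ℂ := Complex.exp (-Complex.I * x) with hzdef
  have h1z : ‖1+z‖^2 = 2+2*Real.cos x := by
    have := normsq_lin' 1 1 x
    push_cast at this
    rw [one_mul] at this
    rw [hzdef, this]; ring
  have hcd : ‖(c:ℂ)+(d:ℂ)*z‖^2 = c^2+d^2+2*c*d*Real.cos x := normsq_lin' c d x
  have hpos1 : 0 < 2+2*Real.cos x := by
    rcases lt_or_eq_of_le (Real.neg_one_le_cos x) with h | h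
    · linarith
    · exact absurd h.symm hx
  have hpos2 : 0 < c^2+d^2+2*c*d*Real.cos x := by
    have h3 : |c*d*Real.cos x| ≤ c*|d| := by
      rw [abs_mul, abs_mul, abs_of_pos hc]
      exact mul_le_of_le_one_right (by positivity) (Real.abs_cos_le_one x)
    have h4 : 0 < (c-|d|)*(c-|d|) := mul_pos (by linarith) (by linarith)
    nlinarith [(abs_le.mp h3).1, _root_.sq_abs d]
  have hz1 : (1:ℂ)+z ≠ 0 := by
    intro h
    rw [h] at h1z
    simp at h1z
    linarith
  have hm0 : ((m:ℝ):ℂ) ≠ 0 := by exact_mod_cast ne_of_gt hmR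
  have hcd0 : (c:ℂ)+(d:ℂ)*z ≠ 0 := by
    intro h
    rw [h] at hcd
    simp at hcd
    nlinarith
  have hw : (1 + (γ:ℂ) * (1-z) / (((m:ℕ):ℂ) * (1+z)))⁻¹ = (((m:ℝ):ℂ)*(1+z))/((c:ℂ)+(d:ℂ)*z) := by
    have hnum : 1 + (γ:ℂ) * (1-z) / (((m:ℕ):ℂ) * (1+z)) = ((c:ℂ)+(d:ℂ)*z)/(((m:ℝ):ℂ)*(1+z)) := by
      rw [hcdef, hddef]
      have h2 : (((m:ℝ) + γ : ℝ):ℂ) = ((m:ℕ):ℂ) + (γ:ℂ) := by push_cast; ring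
      have h3 : (((m:ℝ) - γ : ℝ):ℂ) = ((m:ℕ):ℂ) - (γ:ℂ) := by push_cast; ring
      have h4 : (((m:ℝ)):ℂ) = ((m:ℕ):ℂ) := by push_cast; ring
      rw [h2, h3, h4]
      have hm0' : ((m:ℕ):ℂ) ≠ 0 := Nat.cast_ne_zero.mpr (by omega)
      field_simp [hm0', hz1]
      ring
    rw [hnum, inv_div]
  have hFnorm : ‖psiHatFn γ m z‖^2
      = ((2+2*Real.cos x)/4) * (((m:ℝ)^2*(2+2*Real.cos x))/(c^2+d^2+2*c*d*Real.cos x))^m := by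
    show ‖(1 + z) / 2 * ((1 + (γ:ℂ) * (1 - z) / (((m:ℕ):ℂ) * (1 + z)))⁻¹) ^ m‖ ^ 2 = _
    rw [hw, norm_mul, norm_pow, norm_div, norm_div, norm_mul]
    simp only [div_pow, mul_pow]
    have hm2 : ‖(((m:ℝ)):ℂ)‖^2 = (m:ℝ)^2 := by
      rw [Complex.norm_real]; rw [Real.norm_eq_abs, abs_of_pos hmR]
    have h2n : ‖(2:ℂ)‖^2 = (4:ℝ) := by norm_num
    rw [pow_right_comm ‖(((m:ℝ)):ℂ)‖ m 2, pow_right_comm ‖1+z‖ m 2,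
      pow_right_comm ‖(c:ℂ)+(d:ℂ)*z‖ m 2, h1z, hcd, hm2, h2n]
  -- now take logs
  rw [hFnorm, Real.log_mul (by positivity) (by positivity), Real.log_div (by positivity) (by norm_num),
    Real.log_pow, Real.log_div (by positivity) (ne_of_gt hpos2), Real.log_mul (by positivity) (ne_of_gt hpos1)]
  ring


lemma sigma_eval (γ : ℝ) (hγ : 0 < γ) (m : ℕ) (hm : 1 ≤ m) :
    sigmaS2c (fun l => psiHatFn γ m (Complex.exp (-Complex.I * l))) =
      (1 / 4) * ((1 + γ / m) ^ (2 * m))⁻¹ := by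
  have hπ : (0:ℝ) < π := Real.pi_pos
  have hmR : (0:ℝ) < m := by exact_mod_cast hm
  have hc : (0:ℝ) < (m:ℝ) + γ := by linarith
  have hdc : |(m:ℝ) - γ| < (m:ℝ) + γ := by rw [abs_lt]; constructor <;> linarith
  set g : ℝ → ℝ := fun x => (1+(m:ℝ)) * Real.log (2+2*Real.cos x)
      + ((m:ℝ)*Real.log ((m:ℝ)^2) - Real.log 4)
      - (m:ℝ) * Real.log ((((m:ℝ)+γ))^2+(((m:ℝ)-γ))^2
          + 2*((m:ℝ)+γ)*((m:ℝ)-γ)*Real.cos x) with hg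
  have hpos2 : ∀ x : ℝ, 0 < (((m:ℝ)+γ))^2+(((m:ℝ)-γ))^2
      + 2*((m:ℝ)+γ)*((m:ℝ)-γ)*Real.cos x := by
    intro x
    set c := (m:ℝ) + γ
    set d := (m:ℝ) - γ
    have h3 : |c*d*Real.cos x| ≤ c*|d| := by
      rw [abs_mul, abs_mul, abs_of_pos hc]
      exact mul_le_of_le_one_right (by positivity) (Real.abs_cos_le_one x)
    have h4 : 0 < (c-|d|)*(c-|d|) := mul_pos (by linarith) (by linarith)
    nlinarith [(abs_le.mp h3).1, _root_.sq_abs d]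
  -- a.e. equality of integrands
  have hae : ∫ x in (-π)..π, Real.log (‖psiHatFn γ m (Complex.exp (-Complex.I * x))‖^2)
      = ∫ x in (-π)..π, g x := by
    apply intervalIntegral.integral_congr_ae
    have h0 : ∀ᵐ x : ℝ ∂volume, x ≠ π := by
      refine (MeasureTheory.ae_iff).mpr ?_
      simpa using Real.volume_singleton
    filter_upwards [h0] with x hx0 hxmem
    rw [Set.uIoc_of_le (by linarith)] at hxmem
    obtain ⟨hx1, hx2⟩ := hxmem
    have hx2' : x < π := lt_of_le_of_ne hx2 hx0
    have hcos : Real.cos x ≠ -1 := by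
      intro h
      have h1 : Real.cos (x - π) = 1 := by rw [Real.cos_sub_pi, h]; norm_num
      have := (Real.cos_eq_one_iff_of_lt_of_lt (x := x - π)
        (by linarith) (by linarith)).mp h1
      linarith
    exact pointwise_log_norm γ hγ m hm x hcos
  -- compute ∫ g
  have iA := intInt_log_two_add_cos
  have iB : IntervalIntegrable (fun x => Real.log ((((m:ℝ)+γ))^2+(((m:ℝ)-γ))^2
      + 2*((m:ℝ)+γ)*((m:ℝ)-γ)*Real.cos x)) volume (-π) π := by
    apply Continuous.intervalIntegrable
    apply Continuous.log (by fun_prop)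
    exact fun x => ne_of_gt (hpos2 x)
  have hgint : ∫ x in (-π)..π, g x
      = (1+(m:ℝ)) * (∫ x in (-π)..π, Real.log (2+2*Real.cos x))
        + (π - (-π)) • ((m:ℝ)*Real.log ((m:ℝ)^2) - Real.log 4)
        - (m:ℝ) * ∫ x in (-π)..π, Real.log ((((m:ℝ)+γ))^2+(((m:ℝ)-γ))^2
            + 2*((m:ℝ)+γ)*((m:ℝ)-γ)*Real.cos x) := by
    rw [hg, ← intervalIntegral.integral_const_mul, ← intervalIntegral.integral_const_mul,
      ← intervalIntegral.integral_const
        (a := -π) (b := π) (c := (m:ℝ)*Real.log ((m:ℝ)^2) - Real.log 4)]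
    rw [← intervalIntegral.integral_add (iA.const_mul _) intervalIntegrable_const,
      ← intervalIntegral.integral_sub ((iA.const_mul _).add intervalIntegrable_const)
        (iB.const_mul _)]
  rw [sigmaS2c, hae, hgint, lemA, lemB hdc]
  -- final arithmetic
  have hbase : (0:ℝ) < 1 + γ/m := by positivity
  have hlog1 : Real.log (1 + γ/(m:ℝ)) = Real.log ((m:ℝ)+γ) - Real.log m := by
    rw [show 1+γ/(m:ℝ) = ((m:ℝ)+γ)/m by field_simp, Real.log_div (ne_of_gt hc) (ne_of_gt hmR)]
  have hval : (1 / (2*π)) * ((1+(m:ℝ)) * 0 + (π - (-π)) • ((m:ℝ)*Real.log ((m:ℝ)^2) - Real.log 4)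
      - (m:ℝ) * (4*π*Real.log ((m:ℝ)+γ)))
      = Real.log ((1 / 4) * ((1 + γ/(m:ℝ)) ^ (2*m))⁻¹) := by
    rw [Real.log_mul (by norm_num) (by positivity), Real.log_inv]
    simp only [Real.log_pow]
    rw [hlog1, smul_eq_mul, show Real.log (1/4) = -Real.log 4 by rw [one_div, Real.log_inv]]
    push_cast
    field_simp
    ring
  rw [hval, Real.exp_log (by positivity)]


lemma exp_sub_one_le (y : ℝ) : Real.exp y - 1 ≤ y * Real.exp y := by
  have h := Real.add_one_le_exp (-y)
  rw [Real.exp_neg] at h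
  have hp := Real.exp_pos y
  have h2 : (1 - y) * Real.exp y ≤ 1 := by
    calc (1 - y) * Real.exp y ≤ (Real.exp y)⁻¹ * Real.exp y :=
          mul_le_mul_of_nonneg_right (by linarith) (le_of_lt hp)
      _ = 1 := inv_mul_cancel₀ (ne_of_gt hp)
  nlinarith

lemma quant_bound (γ : ℝ) (hγ : 0 < γ) (m : ℕ) (hm : 1 ≤ m) :
    |(1 / 4) * ((1 + γ / m) ^ (2 * m))⁻¹ - (1 / 4) * Real.exp (-2 * γ)|
      ≤ (γ^2 * Real.exp (2*γ^2) + 1) / m := by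
  have hmR : (0:ℝ) < m := by exact_mod_cast hm
  have hm1 : (1:ℝ) ≤ m := by exact_mod_cast hm
  set t : ℝ := γ / m with ht
  have htpos : 0 < t := by positivity
  have hbase : (0:ℝ) < 1 + t := by linarith
  set L : ℝ := Real.log (1 + t) with hL
  have hLdef : L = Real.log (1 + t) := hL
  clear_value t L
  have hP : ((1 + t) ^ (2*m))⁻¹ = Real.exp (-(2*(m:ℝ)*L)) := by
    rw [← Real.exp_log (pow_pos hbase (2*m)), Real.log_pow, ← Real.exp_neg, ← hLdef]
    congr 1
    push_cast
    ring
  have hLt : L ≤ t := by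
    rw [hLdef]
    linarith [Real.log_le_sub_one_of_pos hbase]
  have hLlow : t - t^2 ≤ L := by
    have h1 := Real.log_le_sub_one_of_pos (inv_pos.mpr hbase)
    rw [Real.log_inv, ← hLdef] at h1
    have h2 : 1 - (1+t)⁻¹ ≤ L := by linarith
    rw [inv_eq_one_div] at h2
    have h3 : t - t^2 ≤ 1 - 1/(1+t) := by
      have h4 : 1 - 1/(1+t) = t/(1+t) := by field_simp; ring
      rw [h4, le_div_iff₀ hbase]
      nlinarith
    linarith
  have hmt : (m:ℝ) * t = γ := by rw [ht]; field_simp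
  have hmt2 : (m:ℝ) * t^2 = γ^2 / m := by rw [ht]; field_simp
  have hmt3 : (m:ℝ)*(t - t^2) = γ - γ^2/m := by rw [mul_sub, hmt, hmt2]
  have hup : -(2*(m:ℝ)*L) ≤ -2*γ + 2*γ^2/m := by
    have h7 := mul_le_mul_of_nonneg_left hLlow hmR.le
    rw [hmt3] at h7
    rw [show -2*γ + 2*γ^2/(m:ℝ) = -2*γ + 2*(γ^2/(m:ℝ)) from by ring]
    linarith
  have hlo : -2*γ ≤ -(2*(m:ℝ)*L) := by
    have h7 := mul_le_mul_of_nonneg_left hLt hmR.le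
    rw [hmt] at h7
    linarith
  have hPlo : Real.exp (-2*γ) ≤ ((1 + t) ^ (2*m))⁻¹ := by
    rw [hP]; exact Real.exp_le_exp.mpr hlo
  have hPup : ((1 + t) ^ (2*m))⁻¹ ≤ Real.exp (-2*γ) * Real.exp (2*γ^2/m) := by
    rw [hP, ← Real.exp_add]
    apply Real.exp_le_exp.mpr
    rw [show -2*γ + 2*γ^2/(m:ℝ) = -2*γ + 2*(γ^2/(m:ℝ)) from by ring] at hup
    rw [show -2*γ + 2*γ^2/(m:ℝ) = -2*γ + 2*(γ^2/(m:ℝ)) from by ring]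
    linarith
  have hx : 2*γ^2/(m:ℝ) ≤ 2*γ^2 := by
    rw [div_le_iff₀ hmR]; nlinarith
  have hee : Real.exp (2*γ^2/m) - 1 ≤ (2*γ^2/m) * Real.exp (2*γ^2) := by
    have h1 := exp_sub_one_le (2*γ^2/m)
    have h2 : Real.exp (2*γ^2/m) ≤ Real.exp (2*γ^2) := Real.exp_le_exp.mpr hx
    nlinarith [Real.exp_pos (2*γ^2/m), div_nonneg (by positivity : (0:ℝ) ≤ 2*γ^2) hmR.le]
  have hexp2γ : Real.exp (-2*γ) ≤ 1 := Real.exp_le_one_iff.mpr (by linarith)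
  have hone : (1:ℝ) ≤ Real.exp (2*γ^2/m) := Real.one_le_exp (by positivity)
  have hdiff : ((1 + t) ^ (2*m))⁻¹ - Real.exp (-2*γ) ≤ 2*γ^2/m * Real.exp (2*γ^2) := by
    have hd1 : ((1+t)^(2*m))⁻¹ - Real.exp (-2*γ)
        ≤ Real.exp (-2*γ) * (Real.exp (2*γ^2/m) - 1) := by
      have e1 : Real.exp (-2*γ) * (Real.exp (2*γ^2/m) - 1)
          = Real.exp (-2*γ) * Real.exp (2*γ^2/m) - Real.exp (-2*γ) := by ring
      rw [e1]; linarith [hPup]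
    have hd2 : Real.exp (-2*γ) * (Real.exp (2*γ^2/m) - 1) ≤ Real.exp (2*γ^2/m) - 1 := by
      have h8 := mul_le_mul_of_nonneg_right hexp2γ
        (by linarith : (0:ℝ) ≤ Real.exp (2*γ^2/m) - 1)
      linarith [h8]
    linarith [hee]
  rw [abs_of_nonneg (by linarith [hPlo])]
  rw [le_div_iff₀ hmR]
  have hfin := mul_le_mul_of_nonneg_right hdiff hmR.le
  have hcancel : (2*γ^2/(m:ℝ) * Real.exp (2*γ^2))*(m:ℝ) = 2*γ^2*Real.exp (2*γ^2) := by
    field_simp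
  rw [hcancel] at hfin
  nlinarith [Real.exp_pos (2*γ^2), hfin]


lemma psi_zero_sq (γ : ℝ) (hγ : 0 < γ) (m : ℕ) (hm : 1 ≤ m) :
    ((((1 / 4) * ((1 + γ / m) ^ (2 * m))⁻¹ : ℝ)) : ℂ) = (psiHatFn γ m 0) ^ 2 := by
  have hm0 : ((m:ℕ):ℂ) ≠ 0 := Nat.cast_ne_zero.mpr (by omega)
  have h1 : psiHatFn γ m 0 = (1/2 : ℂ) * (((1 + (γ:ℂ)/((m:ℕ):ℂ)))⁻¹)^m := by
    rw [psiHatFn]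
    norm_num
  rw [h1, mul_pow, ← pow_mul, show m*2 = 2*m by ring, inv_pow]
  push_cast
  norm_num

end KolmogorovAux

/-- Kolmogorov's geometric-mean formula evaluates exactly for `ψ̂^m`:
`σ_S²(ψ̂^m) = (1/4)(1 + γ/m)^{−2m} = ψ̂^m(0)²`, and this converges to
`σ_S*² = e^{−2γ}/4` at rate `C/m`. -/
theorem stmt_13 (γ : ℝ) (hγ : 0 < γ) :
    (∀ m : ℕ, 1 ≤ m →
      sigmaS2c (fun l => psiHatFn γ m (Complex.exp (-Complex.I * l))) =
        (1 / 4) * ((1 + γ / m) ^ (2 * m))⁻¹ ∧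
      ((((1 / 4) * ((1 + γ / m) ^ (2 * m))⁻¹ : ℝ)) : ℂ) = (psiHatFn γ m 0) ^ 2) ∧
    ∃ C : ℝ, 0 < C ∧ ∀ m : ℕ, 1 ≤ m →
      |(1 / 4) * ((1 + γ / m) ^ (2 * m))⁻¹ - (1 / 4) * Real.exp (-2 * γ)| ≤ C / m ∧
      |sigmaS2c (fun l => psiHatFn γ m (Complex.exp (-Complex.I * l))) -
        Real.exp (-2 * γ) / 4| ≤ C / m := by
  constructor
  · intro m hm
    exact ⟨sigma_eval γ hγ m hm, psi_zero_sq γ hγ m hm⟩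
  · refine ⟨γ^2 * Real.exp (2*γ^2) + 1, by positivity, ?_⟩
    intro m hm
    refine ⟨quant_bound γ hγ m hm, ?_⟩
    rw [sigma_eval γ hγ m hm,
      show Real.exp (-2*γ)/4 = (1/4)*Real.exp (-2*γ) from by ring]
    exact quant_bound γ hγ m hm
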